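/- Let M: {1,…,n} → E(H) be an observable (POVM) on a d-dimensional Hilbert space with n effects M_1,…,M_n summing to the identity. For a fixed input state ρ, the n! states ρ_π = Σ_k Tr[ρ M_{π(k)}] |k⟩⟨k| (π ranging over permutations of {1,…,n}), each with prior 1/n!, can be discriminated with optimal success probability (1/(n-1)!) · max_j Tr[ρ M_j]. -/

import Mathlib

open Matrix Finset Equiv
open scoped ComplexOrder

/-- A density operator: positive semidefinite with unit trace. -/
def IsDensity {d : ℕ} (ρ : Matrix (Fin d) (Fin d) ℂ) : Prop :=
  ρ.PosSemidef ∧ ρ.trace = 1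

lemma diag_nonneg_of_posSemidef {m : Type*} [Fintype m] [DecidableEq m]
    {A : Matrix m m ℂ} (hA : A.PosSemidef) (k : m) : 0 ≤ A k k := by
  have := hA.dotProduct_mulVec_nonneg (Pi.single k 1)
  simpa [dotProduct, Matrix.mulVec, Pi.single_apply, Finset.sum_ite_eq] using this

lemma card_perm_apply_eq (n : ℕ) [NeZero n] (i j : Fin n) :
    (Finset.univ.filter fun π : Equiv.Perm (Fin n) => π i = j).card
      = (n - 1).factorial := by
  have hfib : ∀ j' : Fin n,
      (Finset.univ.filter fun π : Equiv.Perm (Fin n) => π i = j').card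
        = (Finset.univ.filter fun π : Equiv.Perm (Fin n) => π i = j).card := by
    intro j'
    refine Finset.card_bij' (fun π _ => Equiv.swap j' j * π)
      (fun π _ => Equiv.swap j' j * π) ?_ ?_ ?_ ?_
    · intro π hπ
      simp only [Finset.mem_filter, Finset.mem_univ, true_and] at hπ ⊢
      simp [hπ]
    · intro π hπ
      simp only [Finset.mem_filter, Finset.mem_univ, true_and] at hπ ⊢
      simp [hπ]
    · intro π hπ; simp [← mul_assoc]
    · intro π hπ; simp [← mul_assoc]
  have hsum : (Finset.univ : Finset (Equiv.Perm (Fin n))).card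
      = ∑ j' : Fin n, (Finset.univ.filter fun π : Equiv.Perm (Fin n) => π i = j').card :=
    Finset.card_eq_sum_card_fiberwise (fun π _ => Finset.mem_univ (π i))
  simp only [hfib, Finset.sum_const, Finset.card_univ, Fintype.card_fin, smul_eq_mul] at hsum
  have hfact : n.factorial = n * (n - 1).factorial := by
    obtain ⟨m, rfl⟩ : ∃ m, n = m + 1 := ⟨n - 1, by have := NeZero.ne n; omega⟩
    simp [Nat.factorial_succ]
  rw [Fintype.card_perm, Fintype.card_fin, hfact] at hsum
  exact (Nat.eq_of_mul_eq_mul_left (Nat.pos_of_ne_zero (NeZero.ne n)) hsum.symm)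

lemma trace_diagonal_mul {m : Type*} [Fintype m] [DecidableEq m]
    (f : m → ℂ) (A : Matrix m m ℂ) :
    (Matrix.diagonal f * A).trace = ∑ k, f k * A k k := by
  simp [Matrix.trace, Matrix.diag, Matrix.mul_apply, Matrix.diagonal_apply,
    Finset.sum_ite_eq, Finset.mul_sum]

theorem permuted_observable_discrimination
    {d n : ℕ} [NeZero n]
    (M : Fin n → Matrix (Fin d) (Fin d) ℂ)
    (hM : ∀ j, (M j).PosSemidef) (hMsum : ∑ j, M j = 1)
    (ρ : Matrix (Fin d) (Fin d) ℂ) (hρ : IsDensity ρ) :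
    IsGreatest
      { s : ℝ | ∃ T : Equiv.Perm (Fin n) → Matrix (Fin n) (Fin n) ℂ,
          (∀ π, (T π).PosSemidef) ∧ (∑ π, T π = 1) ∧
          s = ((Nat.factorial n : ℝ))⁻¹ * ∑ π : Equiv.Perm (Fin n),
            (((Matrix.diagonal fun k => (ρ * M (π k)).trace) * T π).trace).re }
      (((Nat.factorial (n - 1) : ℝ))⁻¹ * ⨆ j, ((ρ * M j).trace).re) := by
  set p : Fin n → ℝ := fun j => ((ρ * M j).trace).re with hp
  obtain ⟨j₀, hj₀⟩ := Finite.exists_max p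
  have hsup : (⨆ j, ((ρ * M j).trace).re) = p j₀ :=
    le_antisymm (ciSup_le hj₀) (le_ciSup (Set.Finite.bddAbove (Set.finite_range _)) j₀)
  have hfa : (n.factorial : ℝ) ≠ 0 := Nat.cast_ne_zero.mpr n.factorial_ne_zero
  have hfb : ((n - 1).factorial : ℝ) ≠ 0 := Nat.cast_ne_zero.mpr (n - 1).factorial_ne_zero
  have hfact : n.factorial = n * (n - 1).factorial := by
    obtain ⟨m, hm⟩ : ∃ m, n = m + 1 := ⟨n - 1, by have := NeZero.ne n; omega⟩
    subst hm
    simp [Nat.factorial_succ]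
  constructor
  · -- membership : optimal POVM
    refine ⟨fun π => Matrix.diagonal fun k =>
        if π k = j₀ then (((n - 1).factorial : ℂ))⁻¹ else 0, ?_, ?_, ?_⟩
    · intro π
      refine Matrix.posSemidef_diagonal_iff.mpr fun k => ?_
      split
      · rw [show (((n - 1).factorial : ℂ))⁻¹ = ((((n - 1).factorial : ℝ))⁻¹ : ℂ) by push_cast; ring]
        exact_mod_cast Complex.zero_le_real.mpr (by positivity)
      · exact le_refl 0
    · ext i k
      by_cases h : i = k
      · subst h
        simp only [Matrix.sum_apply, Matrix.diagonal_apply_eq, Matrix.one_apply_eq]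
        rw [Finset.sum_ite, Finset.sum_const, Finset.sum_const_zero, add_zero,
          card_perm_apply_eq, nsmul_eq_mul,
          mul_inv_cancel₀ (Nat.cast_ne_zero.mpr (n - 1).factorial_ne_zero)]
      · simp [Matrix.sum_apply, Matrix.diagonal_apply_ne _ h, Matrix.one_apply_ne h]
    · rw [hsup]
      have hterm : ∀ π : Equiv.Perm (Fin n),
          (((Matrix.diagonal fun k => (ρ * M (π k)).trace) *
            Matrix.diagonal fun k =>
              if π k = j₀ then (((n - 1).factorial : ℂ))⁻¹ else 0).trace).re
            = p j₀ * (((n - 1).factorial : ℝ))⁻¹ := by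
        intro π
        rw [trace_diagonal_mul]
        have hdg : ∀ k : Fin n, (Matrix.diagonal fun k =>
            if π k = j₀ then (((n - 1).factorial : ℂ))⁻¹ else 0) k k
            = if π k = j₀ then (((n - 1).factorial : ℂ))⁻¹ else 0 :=
          fun k => Matrix.diagonal_apply_eq _ k
        simp_rw [hdg, mul_ite, mul_zero]
        have hcond : ∀ k : Fin n, (π k = j₀) = (k = π.symm j₀) := fun k => by
          rw [eq_iff_iff]; exact Equiv.apply_eq_iff_eq_symm_apply π
        simp_rw [hcond]
        rw [Finset.sum_ite_eq' Finset.univ (π.symm j₀)]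
        simp only [Finset.mem_univ, if_true, Equiv.apply_symm_apply]
        have hc : (((n - 1).factorial : ℂ))⁻¹ = ((((n - 1).factorial : ℝ))⁻¹ : ℂ) := by
          push_cast; ring
        rw [hc, Complex.mul_re]
        simp [hp]
      simp_rw [hterm]
      rw [Finset.sum_const, Finset.card_univ, Fintype.card_perm, Fintype.card_fin,
        nsmul_eq_mul, hfact]
      have hn0 : (n : ℝ) ≠ 0 := Nat.cast_ne_zero.mpr (NeZero.ne n)
      push_cast
      field_simp
  · rintro s ⟨T, hT, hTsum, rfl⟩
    have hterm : ∀ π : Equiv.Perm (Fin n),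
        (((Matrix.diagonal fun k => (ρ * M (π k)).trace) * T π).trace).re
          ≤ ∑ k, p j₀ * ((T π) k k).re := by
      intro π
      rw [trace_diagonal_mul, Complex.re_sum]
      refine Finset.sum_le_sum fun k _ => ?_
      have h0 : 0 ≤ (T π) k k := diag_nonneg_of_posSemidef (hT π) k
      have him : ((T π) k k).im = 0 := by
        have := (Complex.le_def.mp h0).2; simpa using this.symm
      have hre : 0 ≤ ((T π) k k).re := by
        have := (Complex.le_def.mp h0).1; simpa using this
      rw [Complex.mul_re, him, mul_zero, sub_zero]
      exact mul_le_mul_of_nonneg_right (hj₀ (π k)) hre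
    have hsumtr : ∑ π : Equiv.Perm (Fin n), ∑ k, p j₀ * ((T π) k k).re
        = p j₀ * n := by
      simp_rw [← Finset.mul_sum]
      congr 1
      have h1 : ∑ π : Equiv.Perm (Fin n), ∑ k, ((T π) k k).re
          = ((∑ π : Equiv.Perm (Fin n), (T π).trace)).re := by
        rw [Complex.re_sum]
        refine Finset.sum_congr rfl fun π _ => ?_
        rw [Matrix.trace, Complex.re_sum]; rfl
      rw [h1, ← Matrix.trace_sum, hTsum]
      simp [Matrix.trace_one]
    calc ((n.factorial : ℝ))⁻¹ * ∑ π : Equiv.Perm (Fin n),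
            (((Matrix.diagonal fun k => (ρ * M (π k)).trace) * T π).trace).re
        ≤ ((n.factorial : ℝ))⁻¹ * (p j₀ * n) := by
          rw [← hsumtr]
          exact mul_le_mul_of_nonneg_left (Finset.sum_le_sum fun π _ => hterm π)
            (by positivity)
      _ = ((Nat.factorial (n - 1) : ℝ))⁻¹ * ⨆ j, ((ρ * M j).trace).re := by
          have hn0 : (n : ℝ) ≠ 0 := Nat.cast_ne_zero.mpr (NeZero.ne n)
          rw [hsup, hfact]
          push_cast
          field_simp
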